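/- Let R be a Q-algebra and let π₀, …, πₙ ∈ R be idempotents with πᵢ·πⱼ = 0 for all i < j. Then iterating the non-commutative Gram–Schmidt process n times produces elements p₀, …, pₙ ∈ R that are mutually orthogonal idempotents (pᵢ·pⱼ = 0 for all i ≠ j), where one pass of the process replaces a family (q₀, …, qₙ) by (q'₀, …, q'ₙ) with q'ᵢ := (1 − (1/2)qₙ) ⋯ (1 − (1/2)q_{i+1}) · qᵢ · (1 − (1/2)q_{i−1}) ⋯ (1 − (1/2)q₀). -/

import Mathlib

/-- One pass of the non-commutative Gram--Schmidt process:
`q'ᵢ := (1 - (1/2)qₙ) ⋯ (1 - (1/2)q_{i+1}) · qᵢ · (1 - (1/2)q_{i-1}) ⋯ (1 - (1/2)q₀)`. -/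
def gramSchmidtPass {R : Type*} [Ring R] [Algebra ℚ R] (n : ℕ) (q : ℕ → R) : ℕ → R :=
  fun i =>
    (((List.range (n - i)).map (fun t => 1 - (2:ℚ)⁻¹ • q (n - t))).prod) * q i *
      (((List.range i).reverse.map (fun t => 1 - (2:ℚ)⁻¹ • q t)).prod)

set_option linter.unusedSectionVars false

namespace GSAux

variable {R : Type*} [Ring R] [Algebra ℚ R]

/-- Descending product `(1 - ½q_{b-1}) ⋯ (1 - ½q_a)`. -/
def D (q : ℕ → R) (a b : ℕ) : R :=
  (((List.range' a (b - a)).reverse.map (fun t => 1 - (2:ℚ)⁻¹ • q t)).prod)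

lemma prod_mul_fix (L : List R) (x : R) (h : ∀ a ∈ L, a * x = x) : L.prod * x = x := by
  induction L with
  | nil => simp
  | cons a l ih =>
      rw [List.prod_cons, mul_assoc, ih (fun b hb => h b (List.mem_cons_of_mem a hb)),
        h a List.mem_cons_self]

lemma mul_prod_fix (L : List R) (x : R) (h : ∀ a ∈ L, x * a = x) : x * L.prod = x := by
  induction L with
  | nil => simp
  | cons a l ih =>
      rw [List.prod_cons, ← mul_assoc, h a List.mem_cons_self,
        ih (fun b hb => h b (List.mem_cons_of_mem a hb))]

lemma D_mul_fix (q : ℕ → R) {a b : ℕ} (x : R) (h : ∀ t, a ≤ t → t < b → q t * x = 0) :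
    D q a b * x = x := by
  apply prod_mul_fix
  intro f hf
  simp only [D, List.mem_map, List.mem_reverse, List.mem_range'_1] at hf
  obtain ⟨t, ⟨ht1, ht2⟩, rfl⟩ := hf
  rw [sub_mul, one_mul, smul_mul_assoc, h t ht1 (by omega), smul_zero, sub_zero]

lemma mul_D_fix (q : ℕ → R) {a b : ℕ} (x : R) (h : ∀ t, a ≤ t → t < b → x * q t = 0) :
    x * D q a b = x := by
  apply mul_prod_fix
  intro f hf
  simp only [D, List.mem_map, List.mem_reverse, List.mem_range'_1] at hf
  obtain ⟨t, ⟨ht1, ht2⟩, rfl⟩ := hf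
  rw [mul_sub, mul_one, mul_smul_comm, h t ht1 (by omega), smul_zero, sub_zero]

lemma D_split (q : ℕ → R) {a b c : ℕ} (hab : a ≤ b) (hbc : b ≤ c) :
    D q a c = D q b c * D q a b := by
  unfold D
  rw [← List.prod_append, ← List.map_append, ← List.reverse_append]
  have h := List.range'_append (s := a) (m := b - a) (n := c - b) (step := 1)
  rw [show a + 1 * (b - a) = b by omega, show b - a + (c - b) = c - a by omega] at h
  rw [← h]

lemma D_single (q : ℕ → R) (a : ℕ) : D q a (a + 1) = 1 - (2:ℚ)⁻¹ • q a := by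
  unfold D
  rw [show a + 1 - a = 1 by omega]
  simp [List.range']

lemma pass_eq (n : ℕ) (q : ℕ → R) (i : ℕ) (hi : i ≤ n) :
    gramSchmidtPass n q i = D q (i + 1) (n + 1) * q i * D q 0 i := by
  unfold gramSchmidtPass D
  congr 2
  · rw [show n + 1 - (i + 1) = n - i by omega, List.reverse_range', List.map_map]
    congr 1
    apply List.map_congr_left
    intro t ht
    simp only [List.mem_range] at ht
    simp only [Function.comp_apply]
    rw [show i + 1 + (n - i) - 1 - t = n - t by omega]
  · rw [List.range_eq_range', Nat.sub_zero]

lemma pass_lemma (n k : ℕ) (hk : 1 ≤ k) (q : ℕ → R)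
    (h1 : ∀ i ≤ n, q i * q i = q i)
    (h2 : ∀ i ≤ n, ∀ j ≤ n, i ≠ j → i < j + k → q i * q j = 0) :
    (∀ i ≤ n, gramSchmidtPass n q i * gramSchmidtPass n q i = gramSchmidtPass n q i) ∧
    (∀ i ≤ n, ∀ j ≤ n, i ≠ j → i < j + (k + 1) →
      gramSchmidtPass n q i * gramSchmidtPass n q j = 0) := by
  have hlt : ∀ i j, i ≤ n → j ≤ n → i < j → q i * q j = 0 := fun i j hi hj hij =>
    h2 i hi j hj (by omega) (by omega)
  -- `q i * D q 0 i` kills every `q m` with `m > i`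
  have S1 : ∀ i m, i ≤ n → i < m → m ≤ n → (q i * D q 0 i) * q m = 0 := by
    intro i m hi him hm
    rw [mul_assoc, D_mul_fix q (q m) (fun t ht0 hti => hlt t m (by omega) hm (by omega)),
      hlt i m hi hm him]
  have S2 : ∀ i a, i ≤ n → i < a → (q i * D q 0 i) * D q a (n + 1) = q i * D q 0 i := by
    intro i a hi hia
    exact mul_D_fix q _ (fun t hta htn => S1 i t hi (by omega) (by omega))
  have S3 : ∀ i, i ≤ n → D q 0 i * q i = q i := by
    intro i hi
    exact D_mul_fix q _ (fun t ht0 hti => hlt t i (by omega) hi hti)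
  constructor
  · -- idempotency
    intro i hi
    rw [pass_eq n q i hi]
    set L := D q (i + 1) (n + 1) with hL
    set B := D q 0 i with hB
    have key : (q i * B) * (q i * B) = q i * B := by
      have h' : (q i * B) * (q i * B) = q i * (B * q i) * B := by simp only [mul_assoc]
      rw [h', S3 i hi, h1 i hi]
    have h0 : L * q i * B * (L * q i * B) = L * (((q i * B) * L) * (q i * B)) := by
      simp only [mul_assoc]
    rw [h0, S2 i (i + 1) hi (by omega), key, ← mul_assoc]
  · -- orthogonality
    intro i hi j hj hij hlt'
    rw [pass_eq n q i hi, pass_eq n q j hj]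
    rcases lt_or_gt_of_ne hij with hij' | hij'
    · -- case i < j
      have m1 : (q i * D q 0 i) * D q (j + 1) (n + 1) = q i * D q 0 i :=
        S2 i (j + 1) hi (by omega)
      have m2 : D q 0 i * q j = q j :=
        D_mul_fix q _ (fun t ht0 hti => hlt t j (by omega) hj (by omega))
      have m3 : (q i * D q 0 i) * q j = 0 := by
        rw [mul_assoc, m2, hlt i j hi hj hij']
      have h0 : D q (i + 1) (n + 1) * q i * D q 0 i *
          (D q (j + 1) (n + 1) * q j * D q 0 j) =
          D q (i + 1) (n + 1) * ((((q i * D q 0 i) * D q (j + 1) (n + 1)) * q j) * D q 0 j) := by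
        simp only [mul_assoc]
      rw [h0, m1, m3, zero_mul, mul_zero]
    · -- case j < i ≤ j + k
      have hji : j < i := hij'
      have hik : i ≤ j + k := by omega
      set a := q i * q j with ha
      set x := q i - (2:ℚ)⁻¹ • a with hx
      set y := q j - (2:ℚ)⁻¹ • a with hy
      set B := D q 0 j with hB
      set C := D q (i + 1) (n + 1) with hC
      have f1 : q i * D q (j + 1) i = q i :=
        mul_D_fix q _ (fun t ht1 ht2 => h2 i hi t (by omega) (by omega) (by omega))
      have f2 : D q (j + 1) i * q j = q j :=
        D_mul_fix q _ (fun t ht1 ht2 => h2 t (by omega) j hj (by omega) (by omega))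
      have f3 : q i * D q 0 i = x * B := by
        rw [D_split q (show (0:ℕ) ≤ j + 1 by omega) (show j + 1 ≤ i by omega),
          D_split q (show (0:ℕ) ≤ j by omega) (show j ≤ j + 1 by omega), D_single,
          ← mul_assoc, ← mul_assoc, f1, hx, ha, mul_sub, mul_one, mul_smul_comm]
      have f4 : D q (j + 1) (n + 1) * q j = C * y := by
        rw [D_split q (show j + 1 ≤ i + 1 by omega) (show i + 1 ≤ n + 1 by omega),
          D_split q (show j + 1 ≤ i by omega) (show i ≤ i + 1 by omega), D_single,
          mul_assoc, mul_assoc, f2, hy, ha, sub_mul, one_mul, smul_mul_assoc]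
      have f5 : (x * B) * C = x * B := by
        apply mul_D_fix
        intro t ht1 ht2
        have hBt : B * q t = q t :=
          D_mul_fix q _ (fun s hs1 hs2 => hlt s t (by omega) (by omega) (by omega))
        rw [mul_assoc, hBt, hx, sub_mul, smul_mul_assoc, ha, mul_assoc,
          hlt j t hj (by omega) (by omega), mul_zero, smul_zero,
          hlt i t hi (by omega) (by omega), sub_zero]
      have f6 : B * y = y := by
        apply D_mul_fix
        intro s hs1 hs2
        rw [hy, mul_sub, mul_smul_comm, ha, ← mul_assoc,
          hlt s i (by omega) hi (by omega), zero_mul, smul_zero,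
          hlt s j (by omega) hj (by omega), sub_zero]
      have f7 : x * y = 0 := by
        have hq : q j * q i = 0 := h2 j hj i hi (by omega) (by omega)
        have ha1 : q i * a = a := by rw [ha, ← mul_assoc, h1 i hi]
        have ha2 : a * q j = a := by rw [ha, mul_assoc, h1 j hj]
        have ha3 : a * a = 0 := by
          have : a * a = q i * ((q j * q i) * q j) := by rw [ha]; simp only [mul_assoc]
          rw [this, hq, zero_mul, mul_zero]
        have e1 : x * q j = a - (2:ℚ)⁻¹ • a := by
          rw [hx, sub_mul, smul_mul_assoc, ha2, ha]
        have e2 : x * ((2:ℚ)⁻¹ • a) = (2:ℚ)⁻¹ • a := by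
          rw [mul_smul_comm, hx, sub_mul, smul_mul_assoc, ha3, smul_zero, sub_zero, ha1]
        rw [hy, mul_sub, e1, e2, sub_sub, ← add_smul]
        norm_num
      have h0 : C * q i * D q 0 i * (D q (j + 1) (n + 1) * q j * B) =
          C * ((q i * D q 0 i) * (D q (j + 1) (n + 1) * q j)) * B := by
        simp only [mul_assoc]
      rw [h0, f3, f4, ← mul_assoc (x * B), f5, mul_assoc x, f6, f7, mul_zero, zero_mul]

end GSAux

theorem gram_schmidt_iterated {R : Type*} [Ring R] [Algebra ℚ R]
    (n : ℕ) (π : ℕ → R)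
    (hidem : ∀ i ≤ n, π i * π i = π i)
    (horth : ∀ i ≤ n, ∀ j ≤ n, i < j → π i * π j = 0) :
    let p := (gramSchmidtPass n)^[n] π
    (∀ i ≤ n, p i * p i = p i) ∧
      (∀ i ≤ n, ∀ j ≤ n, i ≠ j → p i * p j = 0) := by
  intro p
  have main : ∀ m, (∀ i ≤ n, ((gramSchmidtPass n)^[m] π) i * ((gramSchmidtPass n)^[m] π) i =
      ((gramSchmidtPass n)^[m] π) i) ∧
      (∀ i ≤ n, ∀ j ≤ n, i ≠ j → i < j + (m + 1) →
        ((gramSchmidtPass n)^[m] π) i * ((gramSchmidtPass n)^[m] π) j = 0) := by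
    intro m
    induction m with
    | zero =>
        refine ⟨by simpa using hidem, ?_⟩
        intro i hi j hj hij hlt
        simpa using horth i hi j hj (by omega)
    | succ m ih =>
        simp only [Function.iterate_succ_apply']
        exact GSAux.pass_lemma n (m + 1) (by omega) _ ih.1 ih.2
  exact ⟨(main n).1, fun i hi j hj hij => (main n).2 i hi j hj hij (by omega)⟩
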